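/- Let 1/4 < H < 1 and let ρ be a real number satisfying: ρ < 4H-3 if 1/4 < H < 1/2, and ρ < 2(H-1) if 1/2 ≤ H < 1. Then the double series ∑_{k ∈ ℤ²₀} |k|^{2ρ} ∑_{h ∈ ℤ²₀, h ≠ k} γ_{h,k}² / (|h|^{4H} |k-h|^{4H}) converges (is finite), where γ_{h,k} = (h^⊥ · k)((k-h) · k) / (2π |h| |k-h| |k|). -/

import Mathlib

/-- Euclidean norm of an element of `ℤ²`. -/
noncomputable def znorm (k : ℤ × ℤ) : ℝ :=
  Real.sqrt ((k.1 : ℝ) ^ 2 + (k.2 : ℝ) ^ 2)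

/-- The rotation by `π/2`: `h^⊥ = (-h⁽²⁾, h⁽¹⁾)`. -/
def perp (h : ℤ × ℤ) : ℤ × ℤ := (-h.2, h.1)

/-- Euclidean inner product of two elements of `ℤ²`, as a real number. -/
def zdot (a b : ℤ × ℤ) : ℝ := (a.1 : ℝ) * (b.1 : ℝ) + (a.2 : ℝ) * (b.2 : ℝ)

/-- The coefficient `γ_{h,k}` of the bilinear term in Fourier series. -/
noncomputable def gammaCoef (h k : ℤ × ℤ) : ℝ :=
  (zdot (perp h) k * zdot (k - h) k) / (2 * Real.pi * znorm h * znorm (k - h) * znorm k)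

lemma znorm_nonneg (k : ℤ × ℤ) : 0 ≤ znorm k := Real.sqrt_nonneg _

lemma znorm_sq (k : ℤ × ℤ) : znorm k ^ 2 = (k.1 : ℝ) ^ 2 + (k.2 : ℝ) ^ 2 :=
  Real.sq_sqrt (by positivity)

lemma one_le_znorm {k : ℤ × ℤ} (hk : k ≠ 0) : 1 ≤ znorm k := by
  have h1 : (1 : ℝ) ≤ (k.1 : ℝ) ^ 2 + (k.2 : ℝ) ^ 2 := by
    have hor : k.1 ≠ 0 ∨ k.2 ≠ 0 := by
      by_contra h; push_neg at h; exact hk (Prod.ext h.1 h.2)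
    have hz : (1 : ℤ) ≤ k.1 ^ 2 + k.2 ^ 2 := by
      rcases hor with h | h
      · nlinarith [sq_nonneg k.2, Int.one_le_abs h, sq_abs k.1, sq_nonneg (|k.1| - 1)]
      · nlinarith [sq_nonneg k.1, Int.one_le_abs h, sq_abs k.2, sq_nonneg (|k.2| - 1)]
    calc (1:ℝ) = ((1:ℤ):ℝ) := by norm_num
    _ ≤ ((k.1 ^ 2 + k.2 ^ 2 : ℤ) : ℝ) := by exact_mod_cast hz
    _ = (k.1:ℝ) ^ 2 + (k.2:ℝ) ^ 2 := by push_cast; ring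
  calc (1:ℝ) = Real.sqrt 1 := by simp
  _ ≤ znorm k := Real.sqrt_le_sqrt h1

lemma znorm_pos {k : ℤ × ℤ} (hk : k ≠ 0) : 0 < znorm k :=
  lt_of_lt_of_le one_pos (one_le_znorm hk)

lemma znorm_zero : znorm 0 = 0 := by simp [znorm]

lemma abs_zdot_le (a b : ℤ × ℤ) : |zdot a b| ≤ znorm a * znorm b := by
  have h : znorm a * znorm b =
      Real.sqrt (((a.1:ℝ)^2 + (a.2:ℝ)^2) * ((b.1:ℝ)^2 + (b.2:ℝ)^2)) :=
    (Real.sqrt_mul (by positivity) _).symm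
  rw [h, ← Real.sqrt_sq_eq_abs]
  apply Real.sqrt_le_sqrt
  unfold zdot
  nlinarith [sq_nonneg ((a.1:ℝ) * b.2 - (a.2:ℝ) * b.1)]

lemma znorm_perp (h : ℤ × ℤ) : znorm (perp h) = znorm h := by
  unfold znorm perp; simp; ring_nf

lemma znorm_triangle (a b : ℤ × ℤ) : znorm (a + b) ≤ znorm a + znorm b := by
  have hd : zdot a b ≤ znorm a * znorm b := (le_abs_self _).trans (abs_zdot_le a b)
  have e2 := znorm_sq a
  have e3 := znorm_sq b
  have h2 : ((a+b).1:ℝ) ^ 2 + ((a+b).2:ℝ) ^ 2 ≤ (znorm a + znorm b) ^ 2 := by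
    have c1 : ((a+b).1 : ℝ) = (a.1:ℝ) + (b.1:ℝ) := by push_cast [Prod.fst_add]; ring
    have c2 : ((a+b).2 : ℝ) = (a.2:ℝ) + (b.2:ℝ) := by push_cast [Prod.snd_add]; ring
    rw [c1, c2]
    unfold zdot at hd
    nlinarith
  calc znorm (a+b) ≤ Real.sqrt ((znorm a + znorm b)^2) := Real.sqrt_le_sqrt h2
  _ = znorm a + znorm b := Real.sqrt_sq (add_nonneg (znorm_nonneg a) (znorm_nonneg b))

/-- The main pointwise bound on `gammaCoef`. -/
lemma gammaCoef_sq_le {h k : ℤ × ℤ} (hh : h ≠ 0) (hk : k ≠ 0) (hkh : k - h ≠ 0) :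
    gammaCoef h k ^ 2 ≤ znorm k ^ 2 := by
  have P1 := znorm_pos hh
  have P2 := znorm_pos hkh
  have P3 := znorm_pos hk
  have hpi : (1:ℝ) ≤ 2 * Real.pi := by nlinarith [Real.pi_gt_three]
  have hD : (0:ℝ) < 2 * Real.pi * znorm h * znorm (k-h) * znorm k := by positivity
  have hnum : |zdot (perp h) k * zdot (k - h) k| ≤
      (znorm h * znorm (k-h)) * (znorm k * znorm k) := by
    rw [abs_mul]
    calc |zdot (perp h) k| * |zdot (k-h) k|
        ≤ (znorm (perp h) * znorm k) * (znorm (k-h) * znorm k) := by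
          apply mul_le_mul (abs_zdot_le _ _) (abs_zdot_le _ _) (abs_nonneg _) (mul_nonneg (znorm_nonneg _) (znorm_nonneg _))
    _ = (znorm h * znorm (k-h)) * (znorm k * znorm k) := by rw [znorm_perp]; ring
  have habs : |gammaCoef h k| ≤ znorm k := by
    unfold gammaCoef
    rw [abs_div]
    rw [abs_of_pos hD]
    rw [div_le_iff₀ hD]
    calc |zdot (perp h) k * zdot (k - h) k| ≤ (znorm h * znorm (k-h)) * (znorm k * znorm k) := hnum
    _ ≤ znorm k * (2 * Real.pi * znorm h * znorm (k - h) * znorm k) := by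
          have hP : (0:ℝ) < znorm h * znorm (k-h) * (znorm k * znorm k) :=
            mul_pos (mul_pos P1 P2) (mul_pos P3 P3)
          nlinarith [mul_le_mul_of_nonneg_left hpi hP.le]
  calc gammaCoef h k ^ 2 = |gammaCoef h k| ^ 2 := (sq_abs _).symm
  _ ≤ znorm k ^ 2 := by nlinarith [abs_nonneg (gammaCoef h k), znorm_nonneg k]
lemma sum1d {d : ℝ} (hd : -1 < d) (N : ℕ) :
    ∑ i ∈ Finset.range N, ((i : ℝ) + 1) ^ d ≤ (1 + 1/(d+1)) * (N:ℝ) ^ (d+1) := by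
  have hp : 0 < d + 1 := by linarith
  have hco : (0:ℝ) ≤ 1 + 1/(d+1) := by positivity
  rcases Nat.eq_zero_or_pos N with rfl | hN
  · simp [Real.zero_rpow hp.ne']
  have hNR : (1:ℝ) ≤ (N:ℝ) := by exact_mod_cast hN
  have hNp : (0:ℝ) ≤ (N:ℝ)^(d+1) := Real.rpow_nonneg (Nat.cast_nonneg N) (d+1)
  rcases le_or_gt 0 d with h0 | h0
  · have hbd : ∀ i ∈ Finset.range N, ((i:ℝ)+1)^d ≤ (N:ℝ)^d := by
      intro i hi
      apply Real.rpow_le_rpow (by positivity) ?_ h0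
      have : (i+1 : ℕ) ≤ N := Finset.mem_range.mp hi
      exact_mod_cast this
    have hfrac : (0:ℝ) < 1/(d+1) := by positivity
    calc ∑ i ∈ Finset.range N, ((i : ℝ) + 1) ^ d ≤ ∑ _i ∈ Finset.range N, (N:ℝ)^d :=
          Finset.sum_le_sum hbd
    _ = (N:ℝ) * (N:ℝ)^d := by rw [Finset.sum_const, Finset.card_range]; ring
    _ = (N:ℝ)^(d+1) := by
          rw [Real.rpow_add_one (by positivity : (N:ℝ) ≠ 0) d]; ring
    _ ≤ (1 + 1/(d+1)) * (N:ℝ)^(d+1) := by nlinarith [mul_nonneg hfrac.le hNp]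
  · -- Bernoulli / telescoping case
    have key : ∀ i : ℕ, ((i:ℝ)+1)^d ≤ (((i:ℝ)+1)^(d+1) - (i:ℝ)^(d+1)) / (d+1) := by
      intro i
      set n : ℝ := (i:ℝ) + 1 with hn
      have hn1 : (1:ℝ) ≤ n := by rw [hn]; linarith [Nat.cast_nonneg (α := ℝ) i]
      have hnpos : (0:ℝ) < n := by linarith
      have hs : (-1:ℝ) ≤ -1/n := by
        have h1n : 1/n ≤ 1 := by rw [div_le_one hnpos]; exact hn1
        rw [neg_div]; linarith
      have hber : (1 + (-1/n))^(d+1) ≤ 1 + (d+1) * (-1/n) :=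
        rpow_one_add_le_one_add_mul_self hs hp.le (by linarith)
      have hrw : 1 + (-1/n) = (n-1)/n := by field_simp; ring
      rw [hrw] at hber
      have hmul := mul_le_mul_of_nonneg_left hber (Real.rpow_nonneg hnpos.le (d+1))
      rw [Real.div_rpow (by linarith) hnpos.le] at hmul
      have hne : n ^ (d+1) ≠ 0 := (Real.rpow_pos_of_pos hnpos _).ne'
      rw [mul_comm (n^(d+1)) _, div_mul_cancel₀ _ hne] at hmul
      -- hmul : (n-1)^(d+1) ≤ n^(d+1) * (1 + (d+1) * (-1/n))
      have hpow : n ^ (d + 1) / n = n ^ d := by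
        have h := Real.rpow_sub_one hnpos.ne' (d+1)
        ring_nf at h ⊢
        rw [← h]
      have expand : n^(d+1) * (1 + (d+1)*(-1/n)) = n^(d+1) - (d+1)*(n^(d+1)/n) := by
        field_simp; ring
      rw [expand, hpow] at hmul
      have hsub : n - 1 = (i:ℝ) := by rw [hn]; ring
      rw [hsub] at hmul
      rw [le_div_iff₀ hp]
      linarith
    have hone : (1+1/(d+1))*(d+1) = d + 2 := by field_simp; ring
    calc ∑ i ∈ Finset.range N, ((i : ℝ) + 1) ^ d
        ≤ ∑ i ∈ Finset.range N, ((((i:ℝ)+1)^(d+1) - (i:ℝ)^(d+1)) / (d+1)) :=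
          Finset.sum_le_sum (fun i _ => key i)
    _ = (∑ i ∈ Finset.range N, ((((i:ℝ)+1)^(d+1)) - ((i:ℝ)^(d+1)))) / (d+1) := by
          rw [← Finset.sum_div]
    _ = ((N:ℝ)^(d+1) - ((0:ℕ):ℝ)^(d+1)) / (d+1) := by
          congr 1
          have := Finset.sum_range_sub (fun i : ℕ => ((i:ℝ))^(d+1)) N
          simpa [Nat.cast_add, Nat.cast_one] using this
    _ ≤ (1 + 1/(d+1)) * (N:ℝ)^(d+1) := by
          simp only [Nat.cast_zero, Real.zero_rpow hp.ne', sub_zero]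
          rw [div_le_iff₀ hp]
          nlinarith [hNp, hone]

open Finset in
lemma box_znorm_bounds {n : ℕ} {h : ℤ × ℤ} (hh : h ∈ Finset.box n) :
    (n:ℝ) ≤ znorm h ∧ znorm h ≤ 2*n := by
  have hm : max h.1.natAbs h.2.natAbs = n := Int.mem_box.mp hh
  have c1 : ((h.1.natAbs : ℝ))^2 = (h.1:ℝ)^2 := by
    rw [Nat.cast_natAbs, Int.cast_abs, sq_abs]
  have c2 : ((h.2.natAbs : ℝ))^2 = (h.2:ℝ)^2 := by
    rw [Nat.cast_natAbs, Int.cast_abs, sq_abs]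
  have hp : (h.1.natAbs : ℝ) ≤ n := by exact_mod_cast le_max_left h.1.natAbs h.2.natAbs |>.trans hm.le
  have hq : (h.2.natAbs : ℝ) ≤ n := by exact_mod_cast le_max_right h.1.natAbs h.2.natAbs |>.trans hm.le
  have hmax : (n:ℝ)^2 ≤ (h.1:ℝ)^2 + (h.2:ℝ)^2 := by
    rcases max_choice h.1.natAbs h.2.natAbs with he | he
    · rw [he] at hm
      nlinarith [c1, c2, sq_nonneg ((h.2:ℝ)), hm ▸ c1]
    · rw [he] at hm
      nlinarith [c1, c2, sq_nonneg ((h.1:ℝ)), hm ▸ c2]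
  constructor
  · calc (n:ℝ) = Real.sqrt ((n:ℝ)^2) := (Real.sqrt_sq (Nat.cast_nonneg n)).symm
    _ ≤ znorm h := Real.sqrt_le_sqrt hmax
  · have hup : (h.1:ℝ)^2 + (h.2:ℝ)^2 ≤ (2*n)^2 := by nlinarith [Nat.cast_nonneg (α := ℝ) n]
    calc znorm h ≤ Real.sqrt ((2*(n:ℝ))^2) := Real.sqrt_le_sqrt hup
    _ = 2*n := Real.sqrt_sq (by positivity)

lemma box_pairwise_disjoint {m n : ℕ} (hmn : m ≠ n) :
    Disjoint (Finset.box m : Finset (ℤ × ℤ)) (Finset.box n) := by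
  rw [Finset.disjoint_left]
  intro x hxm hxn
  exact hmn ((Int.mem_box.mp hxm).symm.trans (Int.mem_box.mp hxn))

lemma ball2d {c : ℝ} (hc : -2 < c) : ∃ C : ℝ, 0 ≤ C ∧ ∀ R : ℝ, 1 ≤ R →
    ∀ s : Finset (ℤ × ℤ), (∀ h ∈ s, h ≠ 0 ∧ znorm h ≤ R) →
    ∑ h ∈ s, znorm h ^ c ≤ C * R ^ (c+2) := by
  have hd : -1 < c + 1 := by linarith
  have hc2 : 0 < c + 2 := by linarith
  have hcoe : (0:ℝ) < 1 + 1/(c+1+1) := by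
    have := div_pos one_pos (show (0:ℝ) < c+1+1 by linarith); linarith
  have hKpos : (0:ℝ) < 2^|c| := Real.rpow_pos_of_pos two_pos _
  have hCpos : (0:ℝ) < 8 * 2^|c| * (1 + 1/(c+1+1)) := by positivity
  refine ⟨8 * 2^|c| * (1 + 1/(c+1+1)), hCpos.le, fun R hR s hs => ?_⟩
  set N := ⌊R⌋₊ with hN
  have hK1 : (1:ℝ) ≤ 2^|c| := Real.one_le_rpow one_le_two (abs_nonneg c)
  have hsub : s ⊆ (Finset.range N).biUnion (fun i => Finset.box (i+1)) := by
    intro h hh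
    obtain ⟨hh0, hhR⟩ := hs h hh
    set m := max h.1.natAbs h.2.natAbs with hmdef
    have hm : h ∈ Finset.box m := Int.mem_box.mpr rfl
    have hm1 : 1 ≤ m := by
      rcases Nat.eq_zero_or_pos m with h0 | h1
      · exfalso
        rw [hmdef, Nat.max_eq_zero_iff] at h0
        exact hh0 (Prod.ext (Int.natAbs_eq_zero.mp h0.1) (Int.natAbs_eq_zero.mp h0.2))
      · exact h1
    have hmR : (m:ℝ) ≤ R := ((box_znorm_bounds hm).1).trans hhR
    have hmN : m ≤ N := Nat.le_floor hmR
    apply Finset.mem_biUnion.mpr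
    exact ⟨m - 1, Finset.mem_range.mpr (by omega), by rwa [Nat.sub_add_cancel hm1]⟩
  have hnonneg : ∀ h : ℤ × ℤ, 0 ≤ znorm h ^ c := fun h => Real.rpow_nonneg (znorm_nonneg h) c
  have hboxsum : ∀ i : ℕ, ∑ h ∈ Finset.box (i+1), znorm h ^ c
      ≤ 8 * 2^|c| * ((i:ℝ)+1)^(c+1) := by
    intro i
    have hcard : (Finset.box (i+1) : Finset (ℤ × ℤ)).card = 8 * (i+1) :=
      Int.card_box (Nat.succ_ne_zero i)
    have hterm : ∀ h ∈ (Finset.box (i+1) : Finset (ℤ × ℤ)),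
        znorm h ^ c ≤ 2^|c| * ((i:ℝ)+1)^c := by
      intro h hh
      obtain ⟨hlo, hhi⟩ := box_znorm_bounds hh
      have hpos : (0:ℝ) < (i:ℝ)+1 := by positivity
      have hlo' : ((i:ℝ)+1) ≤ znorm h := by exact_mod_cast hlo
      have hhi' : znorm h ≤ 2*((i:ℝ)+1) := by exact_mod_cast hhi
      rcases le_or_gt 0 c with h0 | h0
      · have : znorm h ^ c ≤ (2*((i:ℝ)+1))^c :=
          Real.rpow_le_rpow (znorm_nonneg h) hhi' h0
        rw [Real.mul_rpow (by norm_num) hpos.le] at this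
        rw [abs_of_nonneg h0]
        calc znorm h ^ c ≤ 2^c * ((i:ℝ)+1)^c := this
        _ ≤ 2^c * ((i:ℝ)+1)^c := le_refl _
      · have h1 : znorm h ^ c ≤ ((i:ℝ)+1)^c :=
          Real.rpow_le_rpow_of_nonpos hpos hlo' h0.le
        have h2 : (0:ℝ) ≤ ((i:ℝ)+1)^c := Real.rpow_nonneg hpos.le c
        nlinarith
    calc ∑ h ∈ Finset.box (i+1), znorm h ^ c
        ≤ ∑ _h ∈ (Finset.box (i+1) : Finset (ℤ × ℤ)), 2^|c| * ((i:ℝ)+1)^c :=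
          Finset.sum_le_sum hterm
    _ = 8 * ((i:ℝ)+1) * (2^|c| * ((i:ℝ)+1)^c) := by
          rw [Finset.sum_const, hcard]; push_cast; ring
    _ = 8 * 2^|c| * (((i:ℝ)+1) * ((i:ℝ)+1)^c) := by ring
    _ = 8 * 2^|c| * ((i:ℝ)+1)^(c+1) := by
          rw [Real.rpow_add_one (by positivity : ((i:ℝ)+1) ≠ 0) c]; ring
  calc ∑ h ∈ s, znorm h ^ c
      ≤ ∑ h ∈ (Finset.range N).biUnion (fun i => Finset.box (i+1)), znorm h ^ c :=
        Finset.sum_le_sum_of_subset_of_nonneg hsub (fun h _ _ => hnonneg h)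
  _ = ∑ i ∈ Finset.range N, ∑ h ∈ Finset.box (i+1), znorm h ^ c := by
        apply Finset.sum_biUnion
        intro x _ y _ hxy
        exact box_pairwise_disjoint (by omega)
  _ ≤ ∑ i ∈ Finset.range N, 8 * 2^|c| * ((i:ℝ)+1)^(c+1) :=
        Finset.sum_le_sum (fun i _ => hboxsum i)
  _ = 8 * 2^|c| * ∑ i ∈ Finset.range N, ((i:ℝ)+1)^(c+1) := by
        rw [Finset.mul_sum]
  _ ≤ 8 * 2^|c| * ((1 + 1/(c+1+1)) * (N:ℝ)^(c+1+1)) := by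
        apply mul_le_mul_of_nonneg_left (sum1d hd N) (by positivity : (0:ℝ) ≤ 8 * 2^|c|)
  _ ≤ 8 * 2^|c| * (1 + 1/(c+1+1)) * R^(c+2) := by
        have hNR : (N:ℝ) ≤ R := Nat.floor_le (by linarith)
        have : (N:ℝ)^(c+1+1) ≤ R^(c+2) := by
          rw [show c+1+1 = c+2 by ring]
          exact Real.rpow_le_rpow (Nat.cast_nonneg N) hNR hc2.le
        nlinarith [Real.rpow_nonneg (Nat.cast_nonneg N) (c+1+1), hK1,
          mul_le_mul_of_nonneg_left this hCpos.le]

lemma natAbs_le_znorm (h : ℤ × ℤ) : ((max h.1.natAbs h.2.natAbs : ℕ) : ℝ) ≤ znorm h := by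
  have hm : h ∈ Finset.box (max h.1.natAbs h.2.natAbs) := Int.mem_box.mpr rfl
  exact (box_znorm_bounds hm).1

lemma L0 {c : ℝ} (hc : c < -2) : ∑' h : ℤ × ℤ, ENNReal.ofReal (znorm h ^ c) < ⊤ := by
  have h2 : 2 < -c := by linarith
  have hs : Summable fun x : Fin 2 → ℤ => ‖x‖ ^ (-(-c)) :=
    EisensteinSeries.summable_one_div_norm_rpow h2
  have hs2 : Summable fun h : ℤ × ℤ => ‖(finTwoArrowEquiv ℤ).symm h‖ ^ c := by
    have := ((finTwoArrowEquiv ℤ).symm.summable_iff (f := fun x : Fin 2 → ℤ => ‖x‖ ^ (-(-c)))).mpr hs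
    simpa [Function.comp_def] using this
  have hnn : ∀ h : ℤ × ℤ, 0 ≤ ‖(finTwoArrowEquiv ℤ).symm h‖ ^ c :=
    fun h => Real.rpow_nonneg (norm_nonneg _) c
  have hpt : ∀ h : ℤ × ℤ, ENNReal.ofReal (znorm h ^ c)
      ≤ ENNReal.ofReal (‖(finTwoArrowEquiv ℤ).symm h‖ ^ c) := by
    intro h
    rcases eq_or_ne h 0 with rfl | h0
    · rw [znorm_zero, Real.zero_rpow (by linarith : c ≠ 0)]
      simp
    · apply ENNReal.ofReal_le_ofReal
      have hnorm : ‖(finTwoArrowEquiv ℤ).symm h‖ = ((max h.1.natAbs h.2.natAbs : ℕ) : ℝ) := by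
        rw [EisensteinSeries.norm_eq_max_natAbs]
        simp [finTwoArrowEquiv]
      have hpos : (0:ℝ) < ‖(finTwoArrowEquiv ℤ).symm h‖ := by
        rw [norm_pos_iff]
        intro hz
        apply h0
        have := congrArg (finTwoArrowEquiv ℤ) hz
        exact (by simpa using this : h = (0, 0))
      apply Real.rpow_le_rpow_of_nonpos hpos _ (by linarith : c ≤ 0)
      rw [hnorm]
      exact natAbs_le_znorm h
  calc ∑' h : ℤ × ℤ, ENNReal.ofReal (znorm h ^ c)
      ≤ ∑' h : ℤ × ℤ, ENNReal.ofReal (‖(finTwoArrowEquiv ℤ).symm h‖ ^ c) :=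
        ENNReal.tsum_le_tsum hpt
  _ = ENNReal.ofReal (∑' h : ℤ × ℤ, ‖(finTwoArrowEquiv ℤ).symm h‖ ^ c) :=
        (ENNReal.ofReal_tsum_of_nonneg hnn hs2).symm
  _ < ⊤ := ENNReal.ofReal_lt_top

open scoped Classical in
lemma ball2dE {c : ℝ} (hc : -2 < c) : ∃ C : ℝ, 0 ≤ C ∧ ∀ R : ℝ, 1 ≤ R →
    ∑' k : ℤ × ℤ, (if k ≠ 0 ∧ znorm k ≤ R then ENNReal.ofReal (znorm k ^ c) else 0)
      ≤ ENNReal.ofReal (C * R ^ (c+2)) := by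
  obtain ⟨C, hC0, hC⟩ := ball2d hc
  refine ⟨C, hC0, fun R hR => ?_⟩
  rw [ENNReal.tsum_eq_iSup_sum]
  apply iSup_le
  intro t
  have : ∑ k ∈ t, (if k ≠ 0 ∧ znorm k ≤ R then ENNReal.ofReal (znorm k ^ c) else 0)
      = ∑ k ∈ t.filter (fun k => k ≠ 0 ∧ znorm k ≤ R), ENNReal.ofReal (znorm k ^ c) :=
    (Finset.sum_filter _ _).symm
  rw [this]
  have hsum : ∑ k ∈ t.filter (fun k => k ≠ 0 ∧ znorm k ≤ R), ENNReal.ofReal (znorm k ^ c)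
      = ENNReal.ofReal (∑ k ∈ t.filter (fun k => k ≠ 0 ∧ znorm k ≤ R), znorm k ^ c) := by
    rw [ENNReal.ofReal_sum_of_nonneg]
    intro k _
    exact Real.rpow_nonneg (znorm_nonneg k) c
  rw [hsum]
  apply ENNReal.ofReal_le_ofReal
  apply hC R hR
  intro h hh
  have := Finset.mem_filter.mp hh
  exact this.2

lemma znorm_neg (j : ℤ × ℤ) : znorm (-j) = znorm j := by
  unfold znorm
  push_cast [Prod.fst_neg, Prod.snd_neg]
  ring_nf

lemma znorm_tri_sub (k h : ℤ × ℤ) : znorm k ≤ znorm h + znorm (k - h) := by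
  have : k = h + (k - h) := by ring
  calc znorm k = znorm (h + (k - h)) := by rw [← this]
  _ ≤ znorm h + znorm (k - h) := znorm_triangle _ _

lemma znorm_tri_sub' (k h : ℤ × ℤ) : znorm h ≤ znorm k + znorm (k - h) := by
  have : h = k + (-(k - h)) := by ring
  calc znorm h = znorm (k + (-(k - h))) := by rw [← this]
  _ ≤ znorm k + znorm (-(k - h)) := znorm_triangle _ _
  _ = znorm k + znorm (k - h) := by rw [znorm_neg]

/-- If `x ≤ 2 * y` then `y ^ (-s) ≤ 2 ^ s * x ^ (-s)` for `s ≥ 0`, `x, y > 0`. -/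
lemma rpow_neg_double_le {x y s : ℝ} (hx : 0 < x) (hy : 0 < y) (hxy : x ≤ 2*y) (hs : 0 ≤ s) :
    y ^ (-s) ≤ 2^s * x^(-s) := by
  have h2 : x/2 ≤ y := by linarith
  have h1 : y^(-s) ≤ (x/2)^(-s) :=
    Real.rpow_le_rpow_of_nonpos (by linarith) h2 (neg_nonpos.mpr hs)
  have h3 : (x/2)^(-s) = x^(-s) / 2^(-s) := Real.div_rpow hx.le (by norm_num : (0:ℝ) ≤ 2) (-s)
  have h4 : (2:ℝ)^(-s) = ((2:ℝ)^s)⁻¹ := Real.rpow_neg (by norm_num) s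
  have h5 : (0:ℝ) < 2^s := Real.rpow_pos_of_pos two_pos s
  calc y^(-s) ≤ (x/2)^(-s) := h1
  _ = x^(-s) / ((2^s)⁻¹) := by rw [h3, h4]
  _ = 2^s * x^(-s) := by field_simp

lemma mul_le_mul3 {a b c d e f : ℝ} (h1 : a ≤ d) (h2 : b ≤ e) (h3 : c ≤ f)
    (hb : 0 ≤ b) (hc : 0 ≤ c) (hd : 0 ≤ d) (he : 0 ≤ e) :
    a * b * c ≤ d * e * f :=
  mul_le_mul (mul_le_mul h1 h2 hb hd) h3 hc (mul_nonneg hd he)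

open scoped Classical in
/-- The dominating summand. -/
noncomputable def Ffun (β a : ℝ) : (ℤ × ℤ) × (ℤ × ℤ) → ENNReal := fun p =>
  if p.1 ≠ 0 ∧ p.2 ≠ 0 ∧ p.2 ≠ p.1 then
    ENNReal.ofReal (znorm p.2 ^ β) * ENNReal.ofReal (znorm p.1 ^ (-a)) *
      ENNReal.ofReal (znorm (p.2 - p.1) ^ (-a))
  else 0

open scoped Classical in
/-- Dominating function for the region where `k` is smallest. -/
noncomputable def GAfun (β a : ℝ) : (ℤ × ℤ) × (ℤ × ℤ) → ENNReal := fun p =>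
  (if p.2 ≠ 0 ∧ znorm p.2 ≤ znorm p.1 then ENNReal.ofReal (znorm p.2 ^ β) else 0) *
    (ENNReal.ofReal ((2:ℝ)^a) * ENNReal.ofReal (znorm p.1 ^ (-(2*a))))

open scoped Classical in
/-- Dominating function for the region where `h` is smallest. -/
noncomputable def GBfun (β a a' : ℝ) : (ℤ × ℤ) × (ℤ × ℤ) → ENNReal := fun p =>
  (if p.1 ≠ 0 ∧ znorm p.1 ≤ znorm p.2 then ENNReal.ofReal (znorm p.1 ^ (-a')) else 0) *
    (ENNReal.ofReal ((2:ℝ)^a) * ENNReal.ofReal (znorm p.2 ^ (β - a)))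

lemma SA_lt_top {β a : ℝ} (hβ : -2 < β) (hE1 : β + 2 - 2*a < -2) :
    ∑' p : (ℤ × ℤ) × (ℤ × ℤ), GAfun β a p < ⊤ := by
  classical
  have ha1 : 1 < a := by linarith
  obtain ⟨CA, hCA0, hCA⟩ := ball2dE hβ
  unfold GAfun
  rw [ENNReal.tsum_prod']
  have hone : ∀ hh : ℤ × ℤ,
      (∑' k : ℤ × ℤ, (if k ≠ 0 ∧ znorm k ≤ znorm hh then ENNReal.ofReal (znorm k ^ β) else 0) *
        (ENNReal.ofReal ((2:ℝ)^a) * ENNReal.ofReal (znorm hh ^ (-(2*a)))))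
      ≤ ENNReal.ofReal (CA * 2^a) * ENNReal.ofReal (znorm hh ^ (β + 2 - 2*a)) := by
    intro hh
    rw [ENNReal.tsum_mul_right]
    by_cases h0 : hh = 0
    · subst h0
      rw [znorm_zero, Real.zero_rpow (ne_of_lt (show -(2*a) < 0 by linarith))]
      simp
    · have h1R : 1 ≤ znorm hh := one_le_znorm h0
      have hball := hCA (znorm hh) h1R
      calc (∑' k : ℤ × ℤ, (if k ≠ 0 ∧ znorm k ≤ znorm hh then ENNReal.ofReal (znorm k ^ β) else 0)) *
            (ENNReal.ofReal ((2:ℝ)^a) * ENNReal.ofReal (znorm hh ^ (-(2*a))))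
          ≤ ENNReal.ofReal (CA * znorm hh ^ (β+2)) *
            (ENNReal.ofReal ((2:ℝ)^a) * ENNReal.ofReal (znorm hh ^ (-(2*a)))) :=
            mul_le_mul_left hball _
      _ = ENNReal.ofReal (CA * 2^a) * ENNReal.ofReal (znorm hh ^ (β + 2 - 2*a)) := by
          rw [← ENNReal.ofReal_mul (Real.rpow_nonneg (by norm_num : (0:ℝ) ≤ 2) a),
            ← ENNReal.ofReal_mul (mul_nonneg hCA0 (Real.rpow_nonneg (znorm_nonneg hh) _)),
            ← ENNReal.ofReal_mul (mul_nonneg hCA0 (Real.rpow_nonneg (by norm_num : (0:ℝ) ≤ 2) a))]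
          congr 1
          have hadd : znorm hh ^ (β + 2 - 2*a) = znorm hh ^ (β+2) * znorm hh ^ (-(2*a)) := by
            rw [← Real.rpow_add (znorm_pos h0)]; ring_nf
          rw [hadd]; ring
  calc ∑' (hh : ℤ × ℤ) (k : ℤ × ℤ),
        (if k ≠ 0 ∧ znorm k ≤ znorm hh then ENNReal.ofReal (znorm k ^ β) else 0) *
          (ENNReal.ofReal ((2:ℝ)^a) * ENNReal.ofReal (znorm hh ^ (-(2*a))))
      ≤ ∑' hh : ℤ × ℤ, ENNReal.ofReal (CA * 2^a) * ENNReal.ofReal (znorm hh ^ (β + 2 - 2*a)) :=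
        ENNReal.tsum_le_tsum hone
  _ = ENNReal.ofReal (CA * 2^a) * ∑' hh : ℤ × ℤ, ENNReal.ofReal (znorm hh ^ (β + 2 - 2*a)) :=
        ENNReal.tsum_mul_left
  _ < ⊤ := ENNReal.mul_lt_top ENNReal.ofReal_lt_top (L0 (by linarith))

lemma SB_lt_top {β a a' : ℝ} (ha'2 : a' < 2) (hE2 : β - a + (2 - a') < -2) :
    ∑' p : (ℤ × ℤ) × (ℤ × ℤ), GBfun β a a' p < ⊤ := by
  classical
  have hba : β - a < -2 := by linarith
  obtain ⟨CB, hCB0, hCB⟩ := ball2dE (show -2 < -a' by linarith)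
  unfold GBfun
  rw [ENNReal.tsum_prod', ENNReal.tsum_comm]
  have hone : ∀ k : ℤ × ℤ,
      (∑' hh : ℤ × ℤ, (if hh ≠ 0 ∧ znorm hh ≤ znorm k then ENNReal.ofReal (znorm hh ^ (-a')) else 0) *
        (ENNReal.ofReal ((2:ℝ)^a) * ENNReal.ofReal (znorm k ^ (β - a))))
      ≤ ENNReal.ofReal (CB * 2^a) * ENNReal.ofReal (znorm k ^ (β - a + (2 - a'))) := by
    intro k
    rw [ENNReal.tsum_mul_right]
    by_cases h0 : k = 0
    · subst h0
      rw [znorm_zero, Real.zero_rpow (ne_of_lt (show β - a < 0 by linarith))]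
      simp
    · have h1R : 1 ≤ znorm k := one_le_znorm h0
      have hball := hCB (znorm k) h1R
      calc (∑' hh : ℤ × ℤ, (if hh ≠ 0 ∧ znorm hh ≤ znorm k then ENNReal.ofReal (znorm hh ^ (-a')) else 0)) *
            (ENNReal.ofReal ((2:ℝ)^a) * ENNReal.ofReal (znorm k ^ (β - a)))
          ≤ ENNReal.ofReal (CB * znorm k ^ (-a'+2)) *
            (ENNReal.ofReal ((2:ℝ)^a) * ENNReal.ofReal (znorm k ^ (β - a))) :=
            mul_le_mul_left hball _
      _ = ENNReal.ofReal (CB * 2^a) * ENNReal.ofReal (znorm k ^ (β - a + (2 - a'))) := by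
          rw [← ENNReal.ofReal_mul (Real.rpow_nonneg (by norm_num : (0:ℝ) ≤ 2) a),
            ← ENNReal.ofReal_mul (mul_nonneg hCB0 (Real.rpow_nonneg (znorm_nonneg k) _)),
            ← ENNReal.ofReal_mul (mul_nonneg hCB0 (Real.rpow_nonneg (by norm_num : (0:ℝ) ≤ 2) a))]
          congr 1
          have hadd : znorm k ^ (β - a + (2 - a')) = znorm k ^ (-a'+2) * znorm k ^ (β - a) := by
            rw [← Real.rpow_add (znorm_pos h0)]; ring_nf
          rw [hadd]; ring
  calc ∑' (k : ℤ × ℤ) (hh : ℤ × ℤ),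
        (if hh ≠ 0 ∧ znorm hh ≤ znorm k then ENNReal.ofReal (znorm hh ^ (-a')) else 0) *
          (ENNReal.ofReal ((2:ℝ)^a) * ENNReal.ofReal (znorm k ^ (β - a)))
      ≤ ∑' k : ℤ × ℤ, ENNReal.ofReal (CB * 2^a) * ENNReal.ofReal (znorm k ^ (β - a + (2 - a'))) :=
        ENNReal.tsum_le_tsum hone
  _ = ENNReal.ofReal (CB * 2^a) * ∑' k : ℤ × ℤ, ENNReal.ofReal (znorm k ^ (β - a + (2 - a'))) :=
        ENNReal.tsum_mul_left
  _ < ⊤ := ENNReal.mul_lt_top ENNReal.ofReal_lt_top (L0 hE2)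

lemma SC_eq (β a a' : ℝ) :
    ∑' p : (ℤ × ℤ) × (ℤ × ℤ), GBfun β a a' (p.2 - p.1, p.2)
      = ∑' p : (ℤ × ℤ) × (ℤ × ℤ), GBfun β a a' p := by
  have hinv : Function.Involutive
      (fun p : (ℤ × ℤ) × (ℤ × ℤ) => ((p.2 - p.1, p.2) : (ℤ × ℤ) × (ℤ × ℤ))) := by
    intro p
    simp [sub_sub_cancel]
  exact hinv.toPerm _ |>.tsum_eq (GBfun β a a')

lemma cover_le {β a a' : ℝ} (ha0 : 0 < a) (ha'a : a' ≤ a) (p : (ℤ × ℤ) × (ℤ × ℤ)) :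
    Ffun β a p ≤ GAfun β a p + GBfun β a a' p + GBfun β a a' (p.2 - p.1, p.2) := by
  classical
  obtain ⟨h, k⟩ := p
  unfold Ffun
  by_cases hcond : h ≠ 0 ∧ k ≠ 0 ∧ k ≠ h
  swap
  · rw [if_neg hcond]; exact zero_le
  rw [if_pos hcond]
  obtain ⟨hh, hk, hkh⟩ := hcond
  have hj : k - h ≠ 0 := sub_ne_zero.mpr hkh
  have Ph := znorm_pos hh
  have Pk := znorm_pos hk
  have Pj := znorm_pos hj
  have h1h := one_le_znorm hh
  have h1j := one_le_znorm hj
  have nβ : 0 ≤ znorm k ^ β := Real.rpow_nonneg (znorm_nonneg k) β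
  have nh : 0 ≤ znorm h ^ (-a) := Real.rpow_nonneg (znorm_nonneg h) _
  have nj : 0 ≤ znorm (k-h) ^ (-a) := Real.rpow_nonneg (znorm_nonneg (k-h)) _
  have n2 : (0:ℝ) ≤ 2^a := Real.rpow_nonneg (by norm_num) a
  have hLHS : ENNReal.ofReal (znorm k ^ β) * ENNReal.ofReal (znorm h ^ (-a)) *
      ENNReal.ofReal (znorm (k-h) ^ (-a))
      = ENNReal.ofReal (znorm k ^ β * znorm h ^ (-a) * znorm (k-h) ^ (-a)) := by
    rw [ENNReal.ofReal_mul (mul_nonneg nβ nh), ENNReal.ofReal_mul nβ]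
  rcases le_total (znorm k) (znorm h) with hkh' | hhk'
  · rcases le_total (znorm k) (znorm (k-h)) with hkj' | hjk'
    · -- region A : k smallest
      have hreal : znorm k ^ β * znorm h ^ (-a) * znorm (k-h) ^ (-a)
          ≤ znorm k ^ β * (2^a * znorm h ^ (-(2*a))) := by
        have htr : znorm h ≤ 2 * znorm (k-h) := by
          have := znorm_tri_sub' k h; linarith
        have d1 : znorm (k-h) ^ (-a) ≤ 2^a * znorm h ^ (-a) :=
          rpow_neg_double_le Ph Pj htr ha0.le
        have dd : znorm h ^ (-a) * znorm h ^ (-a) = znorm h ^ (-(2*a)) := by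
          rw [← Real.rpow_add Ph]; ring_nf
        calc znorm k ^ β * znorm h ^ (-a) * znorm (k-h) ^ (-a)
            ≤ znorm k ^ β * znorm h ^ (-a) * (2^a * znorm h ^ (-a)) := by
              apply mul_le_mul_of_nonneg_left d1 (mul_nonneg nβ nh)
        _ = znorm k ^ β * (2^a * (znorm h ^ (-a) * znorm h ^ (-a))) := by ring
        _ = znorm k ^ β * (2^a * znorm h ^ (-(2*a))) := by rw [dd]
      have hGA : ENNReal.ofReal (znorm k ^ β * znorm h ^ (-a) * znorm (k-h) ^ (-a))
          ≤ GAfun β a (h, k) := by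
        unfold GAfun
        rw [if_pos ⟨hk, hkh'⟩,
          ← ENNReal.ofReal_mul n2,
          ← ENNReal.ofReal_mul nβ]
        exact ENNReal.ofReal_le_ofReal hreal
      rw [hLHS]
      exact hGA.trans (le_add_right (le_add_right le_rfl))
    · -- k - h smallest (via k ≤ h)
      have hjh' : znorm (k-h) ≤ znorm h := le_trans hjk' hkh'
      have hreal : znorm k ^ β * znorm h ^ (-a) * znorm (k-h) ^ (-a)
          ≤ znorm (k-h) ^ (-a') * (2^a * znorm k ^ (β - a)) := by
        have htr : znorm k ≤ 2 * znorm h := by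
          have := znorm_tri_sub k h; linarith
        have d1 : znorm h ^ (-a) ≤ 2^a * znorm k ^ (-a) :=
          rpow_neg_double_le Pk Ph htr ha0.le
        have d2 : znorm (k-h) ^ (-a) ≤ znorm (k-h) ^ (-a') :=
          Real.rpow_le_rpow_of_exponent_le h1j (by linarith)
        have dd : znorm k ^ β * znorm k ^ (-a) = znorm k ^ (β - a) := by
          rw [← Real.rpow_add Pk]; ring_nf
        calc znorm k ^ β * znorm h ^ (-a) * znorm (k-h) ^ (-a)
            ≤ znorm k ^ β * (2^a * znorm k ^ (-a)) * znorm (k-h) ^ (-a') := by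
              apply mul_le_mul3 le_rfl d1 d2 nh nj (by exact nβ)
                (mul_nonneg n2 (Real.rpow_nonneg (znorm_nonneg k) _))
        _ = (znorm k ^ β * znorm k ^ (-a)) * 2^a * znorm (k-h) ^ (-a') := by ring
        _ = znorm (k-h) ^ (-a') * (2^a * znorm k ^ (β - a)) := by rw [dd]; ring
      have hGC : ENNReal.ofReal (znorm k ^ β * znorm h ^ (-a) * znorm (k-h) ^ (-a))
          ≤ GBfun β a a' ((h,k).2 - (h,k).1, (h,k).2) := by
        unfold GBfun
        simp only
        rw [if_pos ⟨hj, hjk'⟩,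
          ← ENNReal.ofReal_mul n2,
          ← ENNReal.ofReal_mul (Real.rpow_nonneg (znorm_nonneg (k-h)) (-a'))]
        exact ENNReal.ofReal_le_ofReal hreal
      rw [hLHS]
      exact hGC.trans (le_add_self)
  · rcases le_total (znorm h) (znorm (k-h)) with hhj' | hjh'
    · -- region B : h smallest
      have hreal : znorm k ^ β * znorm h ^ (-a) * znorm (k-h) ^ (-a)
          ≤ znorm h ^ (-a') * (2^a * znorm k ^ (β - a)) := by
        have htr : znorm k ≤ 2 * znorm (k-h) := by
          have := znorm_tri_sub k h; linarith
        have d1 : znorm (k-h) ^ (-a) ≤ 2^a * znorm k ^ (-a) :=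
          rpow_neg_double_le Pk Pj htr ha0.le
        have d2 : znorm h ^ (-a) ≤ znorm h ^ (-a') :=
          Real.rpow_le_rpow_of_exponent_le h1h (by linarith)
        have dd : znorm k ^ β * znorm k ^ (-a) = znorm k ^ (β - a) := by
          rw [← Real.rpow_add Pk]; ring_nf
        calc znorm k ^ β * znorm h ^ (-a) * znorm (k-h) ^ (-a)
            ≤ znorm k ^ β * znorm h ^ (-a') * (2^a * znorm k ^ (-a)) := by
              apply mul_le_mul3 le_rfl d2 d1 nh nj nβ
                (Real.rpow_nonneg (znorm_nonneg h) _)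
        _ = (znorm k ^ β * znorm k ^ (-a)) * 2^a * znorm h ^ (-a') := by ring
        _ = znorm h ^ (-a') * (2^a * znorm k ^ (β - a)) := by rw [dd]; ring
      have hGB : ENNReal.ofReal (znorm k ^ β * znorm h ^ (-a) * znorm (k-h) ^ (-a))
          ≤ GBfun β a a' (h, k) := by
        unfold GBfun
        rw [if_pos ⟨hh, hhk'.trans (le_refl _) |>.trans (le_refl _)⟩,
          ← ENNReal.ofReal_mul n2,
          ← ENNReal.ofReal_mul (Real.rpow_nonneg (znorm_nonneg h) (-a'))]
        exact ENNReal.ofReal_le_ofReal hreal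
      rw [hLHS]
      calc ENNReal.ofReal (znorm k ^ β * znorm h ^ (-a) * znorm (k-h) ^ (-a))
          ≤ GBfun β a a' (h, k) := hGB
      _ ≤ GAfun β a (h, k) + GBfun β a a' (h, k) := le_add_self
      _ ≤ GAfun β a (h, k) + GBfun β a a' (h, k) + GBfun β a a' ((h,k).2 - (h,k).1, (h,k).2) :=
          le_add_right le_rfl
    · -- k - h smallest (via ≤ h ≤ k)
      have hjk' : znorm (k-h) ≤ znorm k := le_trans hjh' hhk'
      have hreal : znorm k ^ β * znorm h ^ (-a) * znorm (k-h) ^ (-a)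
          ≤ znorm (k-h) ^ (-a') * (2^a * znorm k ^ (β - a)) := by
        have htr : znorm k ≤ 2 * znorm h := by
          have := znorm_tri_sub k h; linarith
        have d1 : znorm h ^ (-a) ≤ 2^a * znorm k ^ (-a) :=
          rpow_neg_double_le Pk Ph htr ha0.le
        have d2 : znorm (k-h) ^ (-a) ≤ znorm (k-h) ^ (-a') :=
          Real.rpow_le_rpow_of_exponent_le h1j (by linarith)
        have dd : znorm k ^ β * znorm k ^ (-a) = znorm k ^ (β - a) := by
          rw [← Real.rpow_add Pk]; ring_nf
        calc znorm k ^ β * znorm h ^ (-a) * znorm (k-h) ^ (-a)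
            ≤ znorm k ^ β * (2^a * znorm k ^ (-a)) * znorm (k-h) ^ (-a') := by
              apply mul_le_mul3 le_rfl d1 d2 nh nj nβ
                (mul_nonneg n2 (Real.rpow_nonneg (znorm_nonneg k) _))
        _ = (znorm k ^ β * znorm k ^ (-a)) * 2^a * znorm (k-h) ^ (-a') := by ring
        _ = znorm (k-h) ^ (-a') * (2^a * znorm k ^ (β - a)) := by rw [dd]; ring
      have hGC : ENNReal.ofReal (znorm k ^ β * znorm h ^ (-a) * znorm (k-h) ^ (-a))
          ≤ GBfun β a a' ((h,k).2 - (h,k).1, (h,k).2) := by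
        unfold GBfun
        simp only
        rw [if_pos ⟨hj, hjk'⟩,
          ← ENNReal.ofReal_mul n2,
          ← ENNReal.ofReal_mul (Real.rpow_nonneg (znorm_nonneg (k-h)) (-a'))]
        exact ENNReal.ofReal_le_ofReal hreal
      rw [hLHS]
      exact hGC.trans (le_add_self)

lemma F_lt_top {β a a' : ℝ} (ha0 : 0 < a) (ha'a : a' ≤ a) (hβ : -2 < β)
    (hE1 : β + 2 - 2*a < -2) (ha'2 : a' < 2) (hE2 : β - a + (2 - a') < -2) :
    ∑' p : (ℤ × ℤ) × (ℤ × ℤ), Ffun β a p < ⊤ := by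
  calc ∑' p : (ℤ × ℤ) × (ℤ × ℤ), Ffun β a p
      ≤ ∑' p : (ℤ × ℤ) × (ℤ × ℤ),
        (GAfun β a p + GBfun β a a' p + GBfun β a a' (p.2 - p.1, p.2)) :=
        ENNReal.tsum_le_tsum (cover_le ha0 ha'a)
  _ = (∑' p : (ℤ × ℤ) × (ℤ × ℤ), (GAfun β a p + GBfun β a a' p))
      + ∑' p : (ℤ × ℤ) × (ℤ × ℤ), GBfun β a a' (p.2 - p.1, p.2) := ENNReal.tsum_add
  _ = ((∑' p : (ℤ × ℤ) × (ℤ × ℤ), GAfun β a p) + ∑' p : (ℤ × ℤ) × (ℤ × ℤ), GBfun β a a' p)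
      + ∑' p : (ℤ × ℤ) × (ℤ × ℤ), GBfun β a a' (p.2 - p.1, p.2) := by rw [ENNReal.tsum_add]
  _ < ⊤ := by
      rw [SC_eq]
      have hA := SA_lt_top hβ hE1
      have hB := SB_lt_top ha'2 hE2
      exact ENNReal.add_lt_top.mpr ⟨ENNReal.add_lt_top.mpr ⟨hA, hB⟩, hB⟩

lemma key_real {h k : ℤ × ℤ} (hh : h ≠ 0) (hk : k ≠ 0) (hhk : h ≠ k)
    {e e' aa : ℝ} (hee' : e ≤ e') (haa : 0 < aa) :
    znorm k ^ e * (gammaCoef h k ^ 2 / (znorm h ^ aa * znorm (k - h) ^ aa))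
      ≤ znorm k ^ (e' + 2) * znorm h ^ (-aa) * znorm (k - h) ^ (-aa) := by
  have hj : k - h ≠ 0 := sub_ne_zero.mpr (Ne.symm hhk)
  have Pk := znorm_pos hk
  have Ph := znorm_pos hh
  have Pj := znorm_pos hj
  have h1k := one_le_znorm hk
  have hγ := gammaCoef_sq_le hh hk hj
  have hU : znorm h ^ (-aa) = (znorm h ^ aa)⁻¹ := Real.rpow_neg Ph.le aa
  have hV : znorm (k-h) ^ (-aa) = (znorm (k-h) ^ aa)⁻¹ := Real.rpow_neg Pj.le aa
  have hUpos : (0:ℝ) < znorm h ^ aa := Real.rpow_pos_of_pos Ph aa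
  have hVpos : (0:ℝ) < znorm (k-h) ^ aa := Real.rpow_pos_of_pos Pj aa
  have hdiv : gammaCoef h k ^ 2 / (znorm h ^ aa * znorm (k-h) ^ aa)
      = gammaCoef h k ^ 2 * znorm h ^ (-aa) * znorm (k-h) ^ (-aa) := by
    rw [hU, hV]; field_simp
  rw [hdiv]
  have m1 : znorm k ^ e ≤ znorm k ^ e' := Real.rpow_le_rpow_of_exponent_le h1k hee'
  have m2 : gammaCoef h k ^ 2 ≤ znorm k ^ 2 := hγ
  have hsq : znorm k ^ (2:ℕ) = znorm k ^ ((2:ℕ):ℝ) := (Real.rpow_natCast _ 2).symm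
  have hcomb : znorm k ^ e' * znorm k ^ (2:ℕ) = znorm k ^ (e' + 2) := by
    rw [hsq, ← Real.rpow_add Pk]; norm_num
  have nU : 0 ≤ znorm h ^ (-aa) := Real.rpow_nonneg Ph.le _
  have nV : 0 ≤ znorm (k-h) ^ (-aa) := Real.rpow_nonneg Pj.le _
  calc znorm k ^ e * (gammaCoef h k ^ 2 * znorm h ^ (-aa) * znorm (k-h) ^ (-aa))
      = (znorm k ^ e * gammaCoef h k ^ 2) * znorm h ^ (-aa) * znorm (k-h) ^ (-aa) := by ring
  _ ≤ (znorm k ^ e' * znorm k ^ (2:ℕ)) * znorm h ^ (-aa) * znorm (k-h) ^ (-aa) := by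
      apply mul_le_mul_of_nonneg_right (mul_le_mul_of_nonneg_right ?_ nU) nV
      exact mul_le_mul m1 m2 (sq_nonneg _) (Real.rpow_nonneg Pk.le _)
  _ = znorm k ^ (e' + 2) * znorm h ^ (-aa) * znorm (k-h) ^ (-aa) := by rw [hcomb]

theorem statement_9 (H ρ : ℝ) (hH1 : 1 / 4 < H) (hH2 : H < 1)
    (hρ1 : 1 / 4 < H → H < 1 / 2 → ρ < 4 * H - 3)
    (hρ2 : 1 / 2 ≤ H → H < 1 → ρ < 2 * (H - 1)) :
    (∑' k : {k : ℤ × ℤ // k ≠ 0},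
      ENNReal.ofReal (znorm k.1 ^ (2 * ρ)) *
        ∑' h : {h : ℤ × ℤ // h ≠ 0 ∧ h ≠ k.1},
          ENNReal.ofReal
            (gammaCoef h.1 k.1 ^ 2 /
              (znorm h.1 ^ (4 * H) * znorm (k.1 - h.1) ^ (4 * H)))) < ⊤ := by
  classical
  have hρ4 : ρ < 4*H - 3 := by
    rcases lt_or_ge H (1/2) with h | h
    · exact hρ1 hH1 h
    · have := hρ2 h hH2; linarith
  have hρ2' : ρ < 2*H - 2 := by
    rcases lt_or_ge H (1/2) with h | h
    · have := hρ1 hH1 h; linarith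
    · have := hρ2 h hH2; linarith
  set t : ℝ := min (4*H-3) (2*H-2) with ht
  have htl : -2 < t := by apply lt_min <;> linarith
  have hρt : ρ < t := lt_min hρ4 hρ2'
  set ρ' : ℝ := max ρ ((t-2)/2) with hρ'def
  have hρle : ρ ≤ ρ' := le_max_left _ _
  have hρ'l : -2 < ρ' := lt_of_lt_of_le (by linarith) (le_max_right _ _)
  have hρ't : ρ' < t := max_lt hρt (by linarith)
  have hρ'4 : ρ' < 4*H-3 := lt_of_lt_of_le hρ't (min_le_left _ _)
  have hρ'2 : ρ' < 2*H-2 := lt_of_lt_of_le hρ't (min_le_right _ _)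
  set a : ℝ := 4*H with hadef
  set β : ℝ := 2*ρ' + 2 with hβdef
  have ha0 : 0 < a := by rw [hadef]; linarith
  have ha4 : a < 4 := by rw [hadef]; linarith
  have hβl : -2 < β := by rw [hβdef]; linarith
  have hβ1 : β < 2*a - 4 := by rw [hβdef, hadef]; linarith
  have hβ2 : β < a - 2 := by rw [hβdef, hadef]; linarith
  set ε : ℝ := (a - 2 - β)/2 with hεdef
  have hεpos : 0 < ε := by rw [hεdef]; linarith
  set a' : ℝ := min a (2 - ε) with ha'def
  have ha'a : a' ≤ a := min_le_left _ _
  have ha'2 : a' < 2 := lt_of_le_of_lt (min_le_right _ _) (by linarith)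
  have hE1 : β + 2 - 2*a < -2 := by linarith
  have hE2 : β - a + (2 - a') < -2 := by
    rcases min_cases a (2-ε) with ⟨he, _⟩ | ⟨he, _⟩ <;> rw [ha'def, he] <;> linarith
  have hmain : ∑' p : (ℤ × ℤ) × (ℤ × ℤ), Ffun β a p < ⊤ :=
    F_lt_top ha0 ha'a hβl hE1 ha'2 hE2
  refine lt_of_le_of_lt ?_ hmain
  have hterm : ∀ (k : {k : ℤ × ℤ // k ≠ 0}) (h : {h : ℤ × ℤ // h ≠ 0 ∧ h ≠ k.1}),
      ENNReal.ofReal (znorm k.1 ^ (2 * ρ)) *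
        ENNReal.ofReal (gammaCoef h.1 k.1 ^ 2 /
          (znorm h.1 ^ a * znorm (k.1 - h.1) ^ a)) ≤ Ffun β a (h.1, k.1) := by
    intro k h
    have hcond : (h.1 ≠ 0 ∧ k.1 ≠ 0 ∧ k.1 ≠ h.1) := ⟨h.2.1, k.2, Ne.symm h.2.2⟩
    unfold Ffun
    rw [if_pos hcond]
    dsimp only
    have hdivnn : 0 ≤ gammaCoef h.1 k.1 ^ 2 / (znorm h.1 ^ a * znorm (k.1 - h.1) ^ a) := by
      apply div_nonneg (sq_nonneg _)
      exact mul_nonneg (Real.rpow_nonneg (znorm_nonneg _) _) (Real.rpow_nonneg (znorm_nonneg _) _)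
    have nβ : 0 ≤ znorm k.1 ^ β := Real.rpow_nonneg (znorm_nonneg _) _
    have nh : 0 ≤ znorm h.1 ^ (-a) := Real.rpow_nonneg (znorm_nonneg _) _
    have eL : ENNReal.ofReal (znorm k.1 ^ (2 * ρ)) *
        ENNReal.ofReal (gammaCoef h.1 k.1 ^ 2 / (znorm h.1 ^ a * znorm (k.1 - h.1) ^ a))
        = ENNReal.ofReal (znorm k.1 ^ (2 * ρ) *
            (gammaCoef h.1 k.1 ^ 2 / (znorm h.1 ^ a * znorm (k.1 - h.1) ^ a))) :=
      (ENNReal.ofReal_mul (Real.rpow_nonneg (znorm_nonneg _) _)).symm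
    have eR : ENNReal.ofReal (znorm k.1 ^ β * znorm h.1 ^ (-a) * znorm (k.1 - h.1) ^ (-a))
        = ENNReal.ofReal (znorm k.1 ^ β) * ENNReal.ofReal (znorm h.1 ^ (-a)) *
          ENNReal.ofReal (znorm (k.1 - h.1) ^ (-a)) := by
      rw [ENNReal.ofReal_mul (mul_nonneg nβ nh), ENNReal.ofReal_mul nβ]
    rw [eL, ← eR]
    apply ENNReal.ofReal_le_ofReal
    have := key_real h.2.1 k.2 h.2.2 (show 2*ρ ≤ 2*ρ' by linarith) ha0
    calc znorm k.1 ^ (2*ρ) * (gammaCoef h.1 k.1 ^ 2 / (znorm h.1 ^ a * znorm (k.1 - h.1) ^ a))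
        ≤ znorm k.1 ^ (2*ρ' + 2) * znorm h.1 ^ (-a) * znorm (k.1 - h.1) ^ (-a) := this
    _ = znorm k.1 ^ β * znorm h.1 ^ (-a) * znorm (k.1 - h.1) ^ (-a) := by rw [hβdef]
  calc (∑' k : {k : ℤ × ℤ // k ≠ 0},
      ENNReal.ofReal (znorm k.1 ^ (2 * ρ)) *
        ∑' h : {h : ℤ × ℤ // h ≠ 0 ∧ h ≠ k.1},
          ENNReal.ofReal
            (gammaCoef h.1 k.1 ^ 2 / (znorm h.1 ^ a * znorm (k.1 - h.1) ^ a)))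
      = ∑' k : {k : ℤ × ℤ // k ≠ 0}, ∑' h : {h : ℤ × ℤ // h ≠ 0 ∧ h ≠ k.1},
          ENNReal.ofReal (znorm k.1 ^ (2 * ρ)) *
            ENNReal.ofReal
              (gammaCoef h.1 k.1 ^ 2 / (znorm h.1 ^ a * znorm (k.1 - h.1) ^ a)) :=
        tsum_congr fun k => ENNReal.tsum_mul_left.symm
  _ ≤ ∑' k : {k : ℤ × ℤ // k ≠ 0}, ∑' h : {h : ℤ × ℤ // h ≠ 0 ∧ h ≠ k.1},
        Ffun β a (h.1, k.1) :=
        ENNReal.tsum_le_tsum fun k => ENNReal.tsum_le_tsum fun h => hterm k h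
  _ = ∑' σ : Σ k : {k : ℤ × ℤ // k ≠ 0}, {h : ℤ × ℤ // h ≠ 0 ∧ h ≠ k.1},
        Ffun β a (σ.2.1, σ.1.1) :=
        (ENNReal.tsum_sigma' (fun σ : Σ k : {k : ℤ × ℤ // k ≠ 0}, {h : ℤ × ℤ // h ≠ 0 ∧ h ≠ k.1} =>
          Ffun β a (σ.2.1, σ.1.1))).symm
  _ ≤ ∑' p : (ℤ × ℤ) × (ℤ × ℤ), Ffun β a p := by
        apply ENNReal.tsum_comp_le_tsum_of_injective
        rintro ⟨⟨k1, hk1⟩, ⟨h1, hh1⟩⟩ ⟨⟨k2, hk2⟩, ⟨h2, hh2⟩⟩ heq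
        simp only [Prod.mk.injEq] at heq
        obtain ⟨e1, e2⟩ := heq
        subst e1; subst e2
        rfl
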